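/- Let m, n ≥ 2 be integers with n dividing m, and regard ℤ_n as a ℤ_m-module. For divisors d₁ ≠ d₂ of m with d₁, d₂ ∉ {1, m}, the vertices d₁ℤ_m and d₂ℤ_m are adjacent in the ℤ_n-intersection graph G_n(ℤ_m) if and only if n does not divide lcm(d₁, d₂). -/

import Mathlib

/-- The `M`-intersection graph of ideals of `R`: vertices are the nontrivial ideals of `R`,
and two distinct vertices `I`, `J` are adjacent iff `IM ∩ JM ≠ 0`. -/
def interGraph (R M : Type*) [CommRing R] [AddCommGroup M] [Module R M] :
    SimpleGraph {I : Ideal R // I ≠ ⊥ ∧ I ≠ ⊤} where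
  Adj I J := I ≠ J ∧ (I.1 • ⊤ ⊓ J.1 • ⊤ : Submodule R M) ≠ ⊥
  symm := ⟨fun I J h => ⟨h.1.symm, by rw [inf_comm]; exact h.2⟩⟩
  loopless := ⟨fun I h => h.1 rfl⟩

open Pointwise

/-- Divisibility by a natural number cast in `ZMod n`. -/
lemma zmod_dvd_iff (n d : ℕ) [NeZero n] (x : ZMod n) :
    (d : ZMod n) ∣ x ↔ Nat.gcd d n ∣ x.val := by
  constructor
  · rintro ⟨y, rfl⟩
    have h : (((d * y.val) % n : ℕ) : ZMod n) = (d : ZMod n) * y := by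
      push_cast
      simp [ZMod.natCast_val, ZMod.cast_id]
    have hv : ((d : ZMod n) * y).val = (d * y.val) % n := by
      rw [← h, ZMod.val_natCast]
      exact (Nat.mod_mod_of_dvd _ dvd_rfl).symm ▸ rfl
    rw [hv]
    exact (Nat.dvd_mod_iff (Nat.gcd_dvd_right d n)).mpr
      (Dvd.dvd.mul_right (Nat.gcd_dvd_left d n) _)
  · intro h
    have hb : ((Nat.gcd d n : ℤ) : ZMod n) = (d : ZMod n) * ((Nat.gcdA d n : ℤ) : ZMod n) := by
      rw [Nat.gcd_eq_gcd_ab d n]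
      push_cast
      simp
    obtain ⟨k, hk⟩ := h
    have hx : ((x.val : ℕ) : ZMod n) = x := by simp [ZMod.natCast_val, ZMod.cast_id]
    refine ⟨((Nat.gcdA d n : ℤ) : ZMod n) * k, ?_⟩
    rw [← hx, hk]
    push_cast
    rw [← mul_assoc, ← hb]
    push_cast
    ring

lemma dvd_lcm_gcd (n d₁ d₂ : ℕ) (hn : n ≠ 0) (h1 : d₁ ≠ 0) (h2 : d₂ ≠ 0)
    (h : n ∣ Nat.lcm d₁ d₂) : n ∣ Nat.lcm (d₁.gcd n) (d₂.gcd n) := by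
  have hg1 : d₁.gcd n ≠ 0 := Nat.gcd_ne_zero_left h1
  have hg2 : d₂.gcd n ≠ 0 := Nat.gcd_ne_zero_left h2
  have hL : Nat.lcm d₁ d₂ ≠ 0 := Nat.lcm_ne_zero h1 h2
  have hL' : Nat.lcm (d₁.gcd n) (d₂.gcd n) ≠ 0 := Nat.lcm_ne_zero hg1 hg2
  rw [← Nat.factorization_le_iff_dvd hn hL']
  rw [← Nat.factorization_le_iff_dvd hn hL] at h
  intro p
  have hp := h p
  simp only [Nat.factorization_lcm h1 h2, Finsupp.sup_apply] at hp
  simp only [Nat.factorization_lcm hg1 hg2, Nat.factorization_gcd h1 hn,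
    Nat.factorization_gcd h2 hn, Finsupp.sup_apply, Finsupp.inf_apply]
  omega

lemma mem_span_smul_top (m n : ℕ) (hnm : n ∣ m) [NeZero m] [NeZero n]
    [Module (ZMod m) (ZMod n)]
    (hsmul : ∀ (a : ZMod m) (x : ZMod n), a • x = ZMod.castHom hnm (ZMod n) a * x)
    (d : ℕ) (x : ZMod n) :
    x ∈ (Ideal.span {(d : ZMod m)} • ⊤ : Submodule (ZMod m) (ZMod n)) ↔ (d : ZMod n) ∣ x := by
  rw [Submodule.ideal_span_singleton_smul]
  constructor
  · intro hx
    rw [← SetLike.mem_coe, Submodule.coe_pointwise_smul, Set.mem_smul_set] at hx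
    obtain ⟨y, -, hy⟩ := hx
    refine ⟨y, ?_⟩
    rw [← hy, hsmul, map_natCast]
  · rintro ⟨y, rfl⟩
    rw [← SetLike.mem_coe, Submodule.coe_pointwise_smul, Set.mem_smul_set]
    exact ⟨y, trivial, by rw [hsmul, map_natCast]⟩

/-- For `m, n ≥ 2` with `n ∣ m`, regarding `ℤ_n` as a `ℤ_m`-module via the
natural cast, two distinct vertices `d₁ℤ_m`, `d₂ℤ_m` (where `d₁, d₂` are divisors of `m`
different from `1` and `m`) are adjacent in `G_n(ℤ_m)` iff `n ∤ lcm(d₁, d₂)`. -/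
theorem adj_iff_not_dvd_lcm_zmod (m n : ℕ) (hm : 2 ≤ m) (hn : 2 ≤ n) (hnm : n ∣ m)
    [Module (ZMod m) (ZMod n)]
    (hsmul : ∀ (a : ZMod m) (x : ZMod n), a • x = ZMod.castHom hnm (ZMod n) a * x)
    (d₁ d₂ : ℕ) (hd₁ : d₁ ∣ m) (hd₂ : d₂ ∣ m)
    (h₁ : d₁ ≠ 1) (h₁' : d₁ ≠ m) (h₂ : d₂ ≠ 1) (h₂' : d₂ ≠ m) (hne : d₁ ≠ d₂)
    (I J : {I : Ideal (ZMod m) // I ≠ ⊥ ∧ I ≠ ⊤})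
    (hI : I.1 = Ideal.span {(d₁ : ZMod m)}) (hJ : J.1 = Ideal.span {(d₂ : ZMod m)}) :
    (interGraph (ZMod m) (ZMod n)).Adj I J ↔ ¬ (n ∣ Nat.lcm d₁ d₂) := by
  haveI : NeZero m := ⟨by omega⟩
  haveI : NeZero n := ⟨by omega⟩
  have hm0 : m ≠ 0 := by omega
  have hn0 : n ≠ 0 := by omega
  have hd10 : d₁ ≠ 0 := fun h => hm0 (by simpa [h] using hd₁)
  have hd20 : d₂ ≠ 0 := fun h => hm0 (by simpa [h] using hd₂)
  have hd1m : d₁ < m := lt_of_le_of_ne (Nat.le_of_dvd (by omega) hd₁) h₁'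
  have hd2m : d₂ < m := lt_of_le_of_ne (Nat.le_of_dvd (by omega) hd₂) h₂'
  set g₁ := d₁.gcd n with hg₁
  set g₂ := d₂.gcd n with hg₂
  set L := Nat.lcm g₁ g₂ with hL
  have hg10 : g₁ ≠ 0 := Nat.gcd_ne_zero_left hd10
  have hg20 : g₂ ≠ 0 := Nat.gcd_ne_zero_left hd20
  have hL0 : L ≠ 0 := Nat.lcm_ne_zero hg10 hg20
  have hLn : L ∣ n := Nat.lcm_dvd (Nat.gcd_dvd_right _ _) (Nat.gcd_dvd_right _ _)
  -- the two vertices are distinct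
  have hIJ : I ≠ J := by
    intro h
    apply hne
    have h' : Ideal.span {(d₁ : ZMod m)} = Ideal.span {(d₂ : ZMod m)} := by
      rw [← hI, ← hJ, h]
    have m1 : (d₂ : ZMod m) ∣ (d₁ : ZMod m) := by
      rw [← Ideal.mem_span_singleton, ← h']
      exact Ideal.mem_span_singleton_self _
    have m2 : (d₁ : ZMod m) ∣ (d₂ : ZMod m) := by
      rw [← Ideal.mem_span_singleton, h']
      exact Ideal.mem_span_singleton_self _
    rw [zmod_dvd_iff] at m1 m2
    rw [Nat.gcd_eq_left hd₂, ZMod.val_natCast_of_lt hd1m] at m1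
    rw [Nat.gcd_eq_left hd₁, ZMod.val_natCast_of_lt hd2m] at m2
    exact Nat.dvd_antisymm m2 m1
  -- intersection characterization
  have key : (I.1 • ⊤ ⊓ J.1 • ⊤ : Submodule (ZMod m) (ZMod n)) ≠ ⊥ ↔ ¬ (n ∣ Nat.lcm d₁ d₂) := by
    rw [Submodule.ne_bot_iff]
    constructor
    · rintro ⟨x, hx, hx0⟩ hdvd
      rw [Submodule.mem_inf, hI, hJ, mem_span_smul_top m n hnm hsmul,
        mem_span_smul_top m n hnm hsmul, zmod_dvd_iff, zmod_dvd_iff] at hx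
      have hLx : L ∣ x.val := Nat.lcm_dvd hx.1 hx.2
      have hnl : n ∣ L := dvd_lcm_gcd n d₁ d₂ hn0 hd10 hd20 hdvd
      have hv : x.val = 0 := Nat.eq_zero_of_dvd_of_lt (hnl.trans hLx) (ZMod.val_lt x)
      exact hx0 (by rwa [← ZMod.val_eq_zero])
    · intro hdvd
      have hLne : L ≠ n := by
        intro h
        exact hdvd (h ▸ Nat.lcm_dvd ((Nat.gcd_dvd_left d₁ n).trans (Nat.dvd_lcm_left _ _))
          ((Nat.gcd_dvd_left d₂ n).trans (Nat.dvd_lcm_right _ _)))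
      have hLlt : L < n := lt_of_le_of_ne (Nat.le_of_dvd (by omega) hLn) hLne
      refine ⟨(L : ZMod n), ?_, ?_⟩
      · rw [Submodule.mem_inf, hI, hJ, mem_span_smul_top m n hnm hsmul,
          mem_span_smul_top m n hnm hsmul, zmod_dvd_iff, zmod_dvd_iff,
          ZMod.val_natCast_of_lt hLlt]
        exact ⟨Nat.dvd_lcm_left _ _, Nat.dvd_lcm_right _ _⟩
      · rw [Ne, ← ZMod.val_eq_zero, ZMod.val_natCast_of_lt hLlt]
        exact hL0
  constructor
  · rintro ⟨-, hint⟩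
    exact key.mp hint
  · intro h
    exact ⟨hIJ, key.mpr h⟩
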